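/- Let F be a field and G, F₀ ∈ M_{m×n}(F), and suppose there exists a square-zero matrix H ∈ M_m(F) with G = H·F₀. Let b = min(⌊m/2⌋, m − (rank([G F₀]) − rank(G))), where [G F₀] is the m×2n matrix obtained by placing G and F₀ side by side. Then every square-zero H ∈ M_m(F) with G = H·F₀ satisfies rank(G) ≤ rank(H) ≤ b, and conversely for every integer r with rank(G) ≤ r ≤ b there exists a square-zero H ∈ M_m(F) with G = H·F₀ and rank(H) = r. -/

import Mathlib

open Submodule Set LinearMap Module Matrix

section aux
variable {F V W' : Type*} [Field F] [AddCommGroup V] [Module F V] [FiniteDimensional F V]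
  [AddCommGroup W'] [Module F W']

private lemma finrank_ker_domRestrict_eq (h : V →ₗ[F] V) (S : Submodule F V) :
    finrank F (LinearMap.ker (h.domRestrict S)) = finrank F (LinearMap.ker h ⊓ S : Submodule F V) := by
  rw [LinearMap.ker_domRestrict]
  have h1 : Submodule.comap S.subtype (LinearMap.ker h)
      = Submodule.comap S.subtype (LinearMap.ker h ⊓ S) := by
    rw [Submodule.comap_inf, Submodule.comap_subtype_self, inf_top_eq]
  rw [h1]
  exact (Submodule.comapSubtypeEquivOfLe inf_le_right).finrank_eq

private lemma botha_bounds (f₀ : W' →ₗ[F] V) (h : V →ₗ[F] V) (hsq : h ∘ₗ h = 0) :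
    finrank F (LinearMap.range (h ∘ₗ f₀)) ≤ finrank F (LinearMap.range h) ∧
    2 * finrank F (LinearMap.range h) ≤ finrank F V ∧
    finrank F (LinearMap.range h) + finrank F ((LinearMap.range (h ∘ₗ f₀) ⊔ LinearMap.range f₀ : Submodule F V))
      ≤ finrank F V + finrank F (LinearMap.range (h ∘ₗ f₀)) := by
  have hrk : LinearMap.range h ≤ LinearMap.ker h := LinearMap.range_le_ker_iff.2 hsq
  refine ⟨Submodule.finrank_mono (LinearMap.range_comp_le_range f₀ h), ?_, ?_⟩
  · have h1 := LinearMap.finrank_range_add_finrank_ker h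
    have h2 : finrank F (LinearMap.range h) ≤ finrank F (LinearMap.ker h) :=
      Submodule.finrank_mono hrk
    omega
  · set S := LinearMap.range (h ∘ₗ f₀) ⊔ LinearMap.range f₀ with hSdef
    have h1 := LinearMap.finrank_range_add_finrank_ker (h.domRestrict S)
    have hmapU : Submodule.map h (LinearMap.range (h ∘ₗ f₀)) = ⊥ := by
      refine le_bot_iff.1 ?_
      rintro z ⟨x, hx, rfl⟩
      have : x ∈ LinearMap.ker h := hrk (LinearMap.range_comp_le_range f₀ h hx)
      simpa using this
    have hmapS : Submodule.map h S = LinearMap.range (h ∘ₗ f₀) := by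
      rw [hSdef, Submodule.map_sup, hmapU, bot_sup_eq, ← LinearMap.range_comp]
    rw [LinearMap.range_domRestrict, hmapS] at h1
    have h2 : finrank F (LinearMap.ker (h.domRestrict S))
        ≤ finrank F (LinearMap.ker h) := by
      rw [finrank_ker_domRestrict_eq]
      exact Submodule.finrank_mono inf_le_left
    have h3 := LinearMap.finrank_range_add_finrank_ker h
    omega

set_option maxHeartbeats 1000000 in
private lemma botha_construct (f₀ : W' →ₗ[F] V) (h₀ : V →ₗ[F] V)
    (hsq : h₀ ∘ₗ h₀ = 0) (r : ℕ)
    (hr1 : finrank F (LinearMap.range (h₀ ∘ₗ f₀)) ≤ r)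
    (hr2 : 2 * r ≤ finrank F V)
    (hr3 : r + finrank F ((LinearMap.range (h₀ ∘ₗ f₀) ⊔ LinearMap.range f₀ : Submodule F V))
      ≤ finrank F V + finrank F (LinearMap.range (h₀ ∘ₗ f₀))) :
    ∃ h : V →ₗ[F] V, h ∘ₗ h = 0 ∧ h ∘ₗ f₀ = h₀ ∘ₗ f₀ ∧ finrank F (LinearMap.range h) = r := by
  classical
  set U : Submodule F V := LinearMap.range (h₀ ∘ₗ f₀) with hUdef
  set W : Submodule F V := LinearMap.range f₀ with hWdef
  set S : Submodule F V := U ⊔ W with hSdef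
  set N : Submodule F V := LinearMap.ker h₀ ⊓ S with hNdef
  have hrange_le_ker : LinearMap.range h₀ ≤ LinearMap.ker h₀ :=
    LinearMap.range_le_ker_iff.2 hsq
  have hUker : U ≤ LinearMap.ker h₀ :=
    (LinearMap.range_comp_le_range f₀ h₀).trans hrange_le_ker
  have hUS : U ≤ S := le_sup_left
  have hWS : W ≤ S := le_sup_right
  have hUN : U ≤ N := le_inf hUker hUS
  have hNS : N ≤ S := inf_le_right
  have hNker : N ≤ LinearMap.ker h₀ := inf_le_left
  have hmapU : Submodule.map h₀ U = ⊥ := by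
    refine le_bot_iff.1 ?_
    rintro z ⟨x, hx, rfl⟩
    simpa using hUker hx
  have hmapW : Submodule.map h₀ W = U := by
    rw [hWdef, ← LinearMap.range_comp]
  have hmapS : Submodule.map h₀ S = U := by
    rw [hSdef, Submodule.map_sup, hmapU, hmapW, bot_sup_eq]
  have hU_of_S : ∀ x ∈ S, h₀ x ∈ U := fun x hx => hmapS ▸ Submodule.mem_map_of_mem hx
  -- dimension of N
  have hNdim : finrank F N + finrank F U = finrank F S := by
    have h1 := LinearMap.finrank_range_add_finrank_ker (h₀.domRestrict S)
    rw [LinearMap.range_domRestrict, hmapS, finrank_ker_domRestrict_eq, ← hNdef] at h1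
    omega
  -- adapted independent sets
  obtain ⟨s₁, hs₁U, hs₁span, hs₁li⟩ := exists_linearIndependent F (U : Set V)
  rw [Submodule.span_eq] at hs₁span
  have hs₁N : s₁ ⊆ (N : Set V) := fun x hx => hUN (hs₁U hx)
  set s₂ : Set V := LinearIndepOn.extend (v := _root_.id) hs₁li hs₁N with hs₂def
  have hs₂N : s₂ ⊆ (N : Set V) := LinearIndepOn.extend_subset (v := _root_.id) hs₁li hs₁N
  have hs₁s₂ : s₁ ⊆ s₂ := LinearIndepOn.subset_extend (v := _root_.id) hs₁li hs₁N
  have hs₂li : LinearIndependent F ((↑) : s₂ → V) := LinearIndepOn.linearIndepOn_extend (v := _root_.id) hs₁li hs₁N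
  have hs₂span : Submodule.span F s₂ = N := by
    rw [LinearIndepOn.span_extend_eq_span hs₁li hs₁N, Submodule.span_eq]
  have hs₂S : s₂ ⊆ (S : Set V) := fun x hx => hNS (hs₂N hx)
  set s₃ : Set V := LinearIndepOn.extend (v := _root_.id) hs₂li hs₂S with hs₃def
  have hs₃S : s₃ ⊆ (S : Set V) := LinearIndepOn.extend_subset (v := _root_.id) hs₂li hs₂S
  have hs₂s₃ : s₂ ⊆ s₃ := LinearIndepOn.subset_extend (v := _root_.id) hs₂li hs₂S
  have hs₃li : LinearIndependent F ((↑) : s₃ → V) := LinearIndepOn.linearIndepOn_extend (v := _root_.id) hs₂li hs₂S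
  have hs₃span : Submodule.span F s₃ = S := by
    rw [LinearIndepOn.span_extend_eq_span hs₂li hs₂S, Submodule.span_eq]
  set s₄ : Set V := LinearIndepOn.extend (v := _root_.id) hs₃li (Set.subset_univ s₃) with hs₄def
  have hs₃s₄ : s₃ ⊆ s₄ := LinearIndepOn.subset_extend (v := _root_.id) hs₃li (Set.subset_univ s₃)
  have hs₄li : LinearIndependent F ((↑) : s₄ → V) := LinearIndepOn.linearIndepOn_extend (v := _root_.id) hs₃li (Set.subset_univ s₃)
  have hs₄span : Submodule.span F s₄ = ⊤ := by
    rw [LinearIndepOn.span_extend_eq_span hs₃li (Set.subset_univ s₃), Submodule.span_univ]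
  -- finiteness
  have hfin4 : s₄.Finite := hs₄li.set_finite_of_isNoetherian
  have hfin3 : s₃.Finite := hfin4.subset hs₃s₄
  have hfin2 : s₂.Finite := hfin3.subset hs₂s₃
  have hfin1 : s₁.Finite := hfin2.subset hs₁s₂
  set t₁ := hfin1.toFinset with ht₁def
  set t₂ := hfin2.toFinset with ht₂def
  set t₃ := hfin3.toFinset with ht₃def
  set t₄ := hfin4.toFinset with ht₄def
  have hct : ∀ (s : Set V) (hs : s.Finite) (P : Submodule F V),
      LinearIndependent F ((↑) : s → V) → Submodule.span F s = P →
      hs.toFinset.card = finrank F P := by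
    intro s hs P hli hspan
    subst hspan
    haveI := hs.fintype
    rw [finrank_span_set_eq_card hli]
    exact congrArg Finset.card hs.toFinset_eq_toFinset
  have hc1 : t₁.card = finrank F U := hct s₁ hfin1 U hs₁li hs₁span
  have hc2 : t₂.card = finrank F N := hct s₂ hfin2 N hs₂li hs₂span
  have hc3 : t₃.card = finrank F S := hct s₃ hfin3 S hs₃li hs₃span
  have hc4 : t₄.card = finrank F V := by
    have := hct s₄ hfin4 ⊤ hs₄li hs₄span
    rwa [finrank_top] at this
  have ht₁t₂ : t₁ ⊆ t₂ := Set.Finite.toFinset_subset_toFinset.2 hs₁s₂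
  have ht₂t₃ : t₂ ⊆ t₃ := Set.Finite.toFinset_subset_toFinset.2 hs₂s₃
  have ht₃t₄ : t₃ ⊆ t₄ := Set.Finite.toFinset_subset_toFinset.2 hs₃s₄
  have hg₀r : finrank F U ≤ r := hr1
  have hkm : finrank F S ≤ finrank F V := by
    rw [← hc3, ← hc4]; exact Finset.card_le_card ht₃t₄
  -- choose D
  have hD0 : r - finrank F U ≤ (t₄ \ t₃).card := by
    rw [Finset.card_sdiff_of_subset ht₃t₄, hc4, hc3]; omega
  obtain ⟨D, hDsub, hDcard⟩ := Finset.exists_subset_card_eq hD0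
  -- choose T
  have hT0 : r - finrank F U ≤ ((t₂ \ t₁) ∪ ((t₄ \ t₃) \ D)).card := by
    have hdisj : Disjoint (t₂ \ t₁) ((t₄ \ t₃) \ D) := by
      refine Finset.disjoint_left.2 ?_
      intro x hx hx'
      exact ((Finset.mem_sdiff.1 (Finset.mem_sdiff.1 hx').1).2) (ht₂t₃ (Finset.mem_sdiff.1 hx).1)
    rw [Finset.card_union_of_disjoint hdisj, Finset.card_sdiff_of_subset ht₁t₂,
      Finset.card_sdiff_of_subset hDsub, Finset.card_sdiff_of_subset ht₃t₄, hc1, hc2, hc3, hc4, hDcard]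
    have hg₀N : finrank F U ≤ finrank F N := Submodule.finrank_mono hUN
    omega
  obtain ⟨T, hTsub, hTcard⟩ := Finset.exists_subset_card_eq hT0
  have e : {x // x ∈ D} ≃ {x // x ∈ T} := Finset.equivOfCardEq (by rw [hDcard, hTcard])
  -- facts about D and T
  have hD4 : ∀ x ∈ D, x ∈ s₄ ∧ x ∉ s₃ := by
    intro x hx
    have := Finset.mem_sdiff.1 (hDsub hx)
    exact ⟨hfin4.mem_toFinset.1 this.1, fun h' => this.2 (hfin3.mem_toFinset.2 h')⟩
  have hT' : ∀ y ∈ T, (y ∈ s₂ ∧ y ∉ s₁) ∨ (y ∈ s₄ ∧ y ∉ s₃ ∧ y ∉ D) := by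
    intro y hy
    rcases Finset.mem_union.1 (hTsub hy) with h' | h'
    · obtain ⟨h1, h2⟩ := Finset.mem_sdiff.1 h'
      exact Or.inl ⟨hfin2.mem_toFinset.1 h1, fun h'' => h2 (hfin1.mem_toFinset.2 h'')⟩
    · obtain ⟨h1, h2⟩ := Finset.mem_sdiff.1 h'
      obtain ⟨h3, h4⟩ := Finset.mem_sdiff.1 h1
      exact Or.inr ⟨hfin4.mem_toFinset.1 h3,
        fun h'' => h4 (hfin3.mem_toFinset.2 h''), h2⟩
  -- the basis and the map
  let bas : Basis s₄ F V := Basis.mk hs₄li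
    (by rw [Subtype.range_coe]; exact hs₄span.ge)
  let fdef : V → V := fun x =>
    if x ∈ s₃ then h₀ x else if hx : x ∈ D then ((e ⟨x, hx⟩ : {x // x ∈ T}) : V) else 0
  set h : V →ₗ[F] V := bas.constr F (fun i => fdef (i : V)) with hhdef
  have happly : ∀ x (hx : x ∈ s₄), h x = fdef x := by
    intro x hx
    have h1 := bas.constr_basis F (fun i => fdef (i : V)) ⟨x, hx⟩
    have h2 : bas ⟨x, hx⟩ = x := Basis.mk_apply _ _ _
    rw [← hhdef, h2] at h1
    exact h1
  -- h agrees with h₀ on S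
  have hagree : ∀ y ∈ S, h y = h₀ y := by
    intro y hy
    rw [← hs₃span] at hy
    induction hy using Submodule.span_induction with
    | mem x hx => rw [happly x (hs₃s₄ hx)]; simp only [fdef, if_pos hx]
    | zero => simp
    | add x y _ _ ihx ihy => simp [map_add, ihx, ihy]
    | smul a x _ ih => simp [_root_.map_smul, ih]
  -- composition with f₀
  have hcomp : h ∘ₗ f₀ = h₀ ∘ₗ f₀ := by
    ext w
    exact hagree (f₀ w) (hWS (LinearMap.mem_range_self f₀ w))
  -- square zero
  have hsqz : h ∘ₗ h = 0 := by
    apply bas.ext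
    intro i
    have h2 : bas i = (i : V) := Basis.mk_apply _ _ _
    rw [h2]
    simp only [LinearMap.comp_apply, LinearMap.zero_apply]
    rw [happly _ i.2]
    by_cases hx3 : (i : V) ∈ s₃
    · simp only [fdef, if_pos hx3]
      have hU' : h₀ (i : V) ∈ U := hU_of_S _ (hs₃S hx3)
      rw [hagree _ (hUS hU')]
      simpa using hUker hU'
    · by_cases hxD : (i : V) ∈ D
      · simp only [fdef, if_neg hx3, dif_pos hxD]
        set y : V := ((e ⟨(i : V), hxD⟩ : {x // x ∈ T}) : V) with hydef
        have hyT : y ∈ T := (e ⟨(i : V), hxD⟩).2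
        rcases hT' y hyT with ⟨hy2, _⟩ | ⟨hy4, hy3, hyD⟩
        · rw [hagree _ (hNS (hs₂N hy2))]
          simpa using hNker (hs₂N hy2)
        · rw [happly _ hy4]
          simp only [fdef, if_neg hy3, dif_neg hyD]
      · simp only [fdef, if_neg hx3, dif_neg hxD, map_zero]
  -- range of h
  have himageT : (T : Set V) ⊆ h '' s₄ := by
    intro y hy
    have hy' : y ∈ T := hy
    set x := e.symm ⟨y, hy'⟩ with hxdef
    refine ⟨(x : V), (hD4 _ x.2).1, ?_⟩
    rw [happly _ (hD4 _ x.2).1]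
    simp only [fdef, if_neg (hD4 _ x.2).2, dif_pos x.2]
    have : (⟨(x : V), x.2⟩ : {z // z ∈ D}) = x := rfl
    rw [this, hxdef, Equiv.apply_symm_apply]
  have hrange : LinearMap.range h = U ⊔ Submodule.span F (T : Set V) := by
    rw [LinearMap.range_eq_map, ← hs₄span, Submodule.map_span]
    apply le_antisymm
    · rw [Submodule.span_le]
      rintro z ⟨x, hx4, rfl⟩
      rw [happly x hx4]
      by_cases hx3 : x ∈ s₃
      · simp only [fdef, if_pos hx3]
        exact Submodule.mem_sup_left (hU_of_S _ (hs₃S hx3))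
      · by_cases hxD : x ∈ D
        · simp only [fdef, if_neg hx3, dif_pos hxD]
          exact Submodule.mem_sup_right
            (Submodule.subset_span (e ⟨x, hxD⟩).2)
        · simp only [fdef, if_neg hx3, dif_neg hxD]
          exact Submodule.zero_mem _
    · apply sup_le
      · have hU'' : U = Submodule.span F (h₀ '' s₃) := by
          rw [← Submodule.map_span, hs₃span, hmapS]
        rw [hU'']
        apply Submodule.span_mono
        rintro z ⟨x, hx3, rfl⟩
        exact ⟨x, hs₃s₄ hx3, by rw [happly x (hs₃s₄ hx3)]; simp only [fdef, if_pos hx3]⟩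
      · exact Submodule.span_mono himageT
  -- finrank of range
  refine ⟨h, hsqz, hcomp, ?_⟩
  have hTs₄ : (T : Set V) ⊆ s₄ := by
    intro y hy
    rcases hT' y hy with ⟨hy2, _⟩ | ⟨hy4, _, _⟩
    · exact hs₃s₄ (hs₂s₃ hy2)
    · exact hy4
  have hunion : s₁ ∪ (T : Set V) = ((t₁ ∪ T : Finset V) : Set V) := by
    simp [ht₁def, Set.Finite.coe_toFinset]
  have hsub4 : ((t₁ ∪ T : Finset V) : Set V) ⊆ s₄ := by
    rw [← hunion]
    exact Set.union_subset (fun x hx => hs₃s₄ (hs₂s₃ (hs₁s₂ hx))) hTs₄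
  have hliu : LinearIndependent F ((↑) : ((t₁ ∪ T : Finset V) : Set V) → V) :=
    LinearIndepOn.mono (v := _root_.id) hs₄li hsub4
  have hdisjT : Disjoint t₁ T := by
    refine Finset.disjoint_left.2 ?_
    intro x hx1 hxT
    rcases hT' x hxT with ⟨_, hns₁⟩ | ⟨_, hns₃, _⟩
    · exact hns₁ (hfin1.mem_toFinset.1 hx1)
    · exact hns₃ (hs₂s₃ (hs₁s₂ (hfin1.mem_toFinset.1 hx1)))
  have hspanu : Submodule.span F (s₁ ∪ (T : Set V))
      = Submodule.span F (((t₁ ∪ T : Finset V) : Set V)) := by rw [hunion]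
  rw [hrange, ← hs₁span, ← Submodule.span_union, hspanu,
    finrank_span_finset_eq_card hliu, Finset.card_union_of_disjoint hdisjT, hc1, hTcard]
  omega

end aux


set_option synthInstance.maxHeartbeats 1000000 in
set_option maxHeartbeats 1000000 in
/-- Botha. Let `F` be a field and `G, F₀ ∈ M_{m×n}(F)`, and suppose `G` has
a square-zero right quotient with respect to `F₀`. Let
`b = min ⌊m/2⌋ (m - (rank [G F₀] - rank G))`. Then every square-zero `H` with `G = H * F₀`
satisfies `rank G ≤ rank H ≤ b`, and a square-zero quotient of every rank in this range
exists. -/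
theorem stmt8 {m n : ℕ} {F : Type*} [Field F]
    (G F₀ : Matrix (Fin m) (Fin n) F)
    (h : ∃ H : Matrix (Fin m) (Fin m) F, H * H = 0 ∧ G = H * F₀) :
    (∀ H : Matrix (Fin m) (Fin m) F, H * H = 0 → G = H * F₀ →
      G.rank ≤ H.rank ∧
      H.rank ≤ min (m / 2) (m - ((Matrix.fromCols G F₀).rank - G.rank))) ∧
    (∀ r : ℕ, G.rank ≤ r →
      r ≤ min (m / 2) (m - ((Matrix.fromCols G F₀).rank - G.rank)) →
      ∃ H : Matrix (Fin m) (Fin m) F, H * H = 0 ∧ G = H * F₀ ∧ H.rank = r) := by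
  classical
  obtain ⟨H₀, hH₀sq, hGH₀⟩ := h
  have hdim : finrank F (Fin m → F) = m := by simp
  -- rank of the columns-juxtaposed matrix
  have hcols : (Matrix.fromCols G F₀).rank
      = finrank F ((LinearMap.range G.mulVecLin ⊔ LinearMap.range F₀.mulVecLin :
          Submodule F (Fin m → F))) := by
    have hr : LinearMap.range (Matrix.fromCols G F₀).mulVecLin
        = LinearMap.range G.mulVecLin ⊔ LinearMap.range F₀.mulVecLin := by
      apply le_antisymm
      · rintro z ⟨v, rfl⟩
        have hv : (Matrix.fromCols G F₀).mulVecLin v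
            = G *ᵥ (v ∘ Sum.inl) + F₀ *ᵥ (v ∘ Sum.inr) := by
          conv_lhs => rw [Matrix.mulVecLin_apply,
            show v = Sum.elim (v ∘ Sum.inl) (v ∘ Sum.inr) from (Sum.elim_comp_inl_inr v).symm]
          rw [Matrix.fromCols_mulVec_sumElim]
        rw [hv]
        exact Submodule.add_mem_sup ⟨_, rfl⟩ ⟨_, rfl⟩
      · apply sup_le
        · rintro z ⟨x, rfl⟩
          exact ⟨Sum.elim x 0, by simp [Matrix.mulVecLin_apply]⟩
        · rintro z ⟨y, rfl⟩
          exact ⟨Sum.elim 0 y, by simp [Matrix.mulVecLin_apply]⟩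
    unfold Matrix.rank
    rw [hr]
  have eG : G.rank = finrank F (LinearMap.range G.mulVecLin) := rfl
  have hGk : G.rank ≤ (Matrix.fromCols G F₀).rank := by
    rw [eG, hcols]
    exact Submodule.finrank_mono le_sup_left
  have hkm : (Matrix.fromCols G F₀).rank ≤ m := by
    rw [hcols]
    exact le_trans (Submodule.finrank_le _) (le_of_eq hdim)
  have hG₀lin : G.mulVecLin = H₀.mulVecLin ∘ₗ F₀.mulVecLin := by
    rw [hGH₀, Matrix.mulVecLin_mul]
  constructor
  · intro H hHsq hGH
    have hHlin : H.mulVecLin ∘ₗ H.mulVecLin = 0 := by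
      rw [← Matrix.mulVecLin_mul, hHsq, Matrix.mulVecLin_zero]
    have hGlin : G.mulVecLin = H.mulVecLin ∘ₗ F₀.mulVecLin := by
      rw [hGH, Matrix.mulVecLin_mul]
    obtain ⟨b1, b2, b3⟩ := botha_bounds F₀.mulVecLin H.mulVecLin hHlin
    rw [← hGlin] at b1 b3
    have eH : H.rank = finrank F (LinearMap.range H.mulVecLin) := rfl
    rw [← eG, ← eH] at b1
    rw [← eH] at b2 b3
    rw [← eG, ← hcols, hdim] at b3
    rw [hdim] at b2
    exact ⟨b1, by omega⟩
  · intro r hr1 hr2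
    have hH₀lin : H₀.mulVecLin ∘ₗ H₀.mulVecLin = 0 := by
      rw [← Matrix.mulVecLin_mul, hH₀sq, Matrix.mulVecLin_zero]
    obtain ⟨h, hsq', hcomp, hrk⟩ := botha_construct F₀.mulVecLin H₀.mulVecLin hH₀lin r
      (by rw [← hG₀lin, ← eG]; exact hr1)
      (by rw [hdim]; omega)
      (by rw [← hG₀lin, ← eG, ← hcols, hdim]; omega)
    refine ⟨LinearMap.toMatrix' h, ?_, ?_, ?_⟩
    · rw [← LinearMap.toMatrix'_comp, hsq']
      simp
    · have hF₀ : LinearMap.toMatrix' (F₀.mulVecLin) = F₀ := LinearMap.toMatrix'_toLin' F₀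
      calc G = LinearMap.toMatrix' (G.mulVecLin) := (LinearMap.toMatrix'_toLin' G).symm
        _ = LinearMap.toMatrix' (h ∘ₗ F₀.mulVecLin) := by rw [hG₀lin, hcomp]
        _ = LinearMap.toMatrix' h * F₀ := by rw [LinearMap.toMatrix'_comp, hF₀]
    · have hml : (LinearMap.toMatrix' h).mulVecLin = h := Matrix.toLin'_toMatrix' h
      show finrank F (LinearMap.range (LinearMap.toMatrix' h).mulVecLin) = r
      rw [hml]
      exact hrk
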